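/- Let H : 𝔻° → ℂ be holomorphic on the open unit disc with |H(z)| = |c(z-z_0)(z - 1/conj(z_0))| for all z in the disc, where z_0 ∈ 𝔻°, z_0 ≠ 0, and c ≠ 0. Then H(z) = c_1 (z-z_0)(z - 1/conj(z_0)) for some constant c_1 with |c_1| = |c|. -/

import Mathlib

open Complex

theorem stmt_9 (H : ℂ → ℂ) (hH : DifferentiableOn ℂ H (Metric.ball (0:ℂ) 1))
    (z₀ c : ℂ) (hz₀ : z₀ ∈ Metric.ball (0:ℂ) 1) (hz₀0 : z₀ ≠ 0) (hc : c ≠ 0)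
    (habs : ∀ z ∈ Metric.ball (0:ℂ) 1,
      ‖H z‖ = ‖c * (z - z₀) * (z - (starRingEnd ℂ z₀)⁻¹)‖) :
    ∃ c₁ : ℂ, ‖c₁‖ = ‖c‖ ∧
      ∀ z ∈ Metric.ball (0:ℂ) 1, H z = c₁ * (z - z₀) * (z - (starRingEnd ℂ z₀)⁻¹) := by
  set B : Set ℂ := Metric.ball (0:ℂ) 1 with hB
  have hBo : IsOpen B := Metric.isOpen_ball
  set w : ℂ := (starRingEnd ℂ z₀)⁻¹ with hw
  have hmemabs : ∀ z ∈ B, ‖z‖ < 1 := by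
    intro z hz
    simpa using mem_ball_zero_iff.mp hz
  have habsz₀ : ‖z₀‖ < 1 := hmemabs z₀ hz₀
  have habsw : 1 < ‖w‖ := by
    rw [hw, norm_inv, Complex.norm_conj]
    rw [lt_inv_comm₀ one_pos (by simpa using hz₀0)]
    simpa using habsz₀
  have hsub : ∀ z ∈ B, z - w ≠ 0 := by
    intro z hz h
    have hzw : z = w := sub_eq_zero.mp h
    have : ‖z‖ < ‖w‖ := lt_trans (hmemabs z hz) habsw
    rw [hzw] at this
    exact lt_irrefl _ this
  have hH0 : H z₀ = 0 := by
    have h := habs z₀ hz₀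
    rw [sub_self, mul_zero, zero_mul, norm_zero, norm_eq_zero] at h
    exact h
  set F : ℂ → ℂ := dslope H z₀ with hF
  have hFd : DifferentiableOn ℂ F B := by
    intro z hz
    rcases eq_or_ne z z₀ with rfl | hne
    · have ha : AnalyticAt ℂ H z := hH.analyticAt (hBo.mem_nhds hz)
      rcases ha with ⟨p, r, hp⟩
      exact (hp.hasFPowerSeriesAt.has_fpower_series_dslope_fslope).analyticAt.differentiableAt.differentiableWithinAt
    · exact ((differentiableAt_dslope_of_ne hne).mpr
        (hH.differentiableAt (hBo.mem_nhds hz))).differentiableWithinAt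
  have hFeq : ∀ z ∈ B, (z - z₀) * F z = H z := by
    intro z hz
    have := sub_smul_dslope H z₀ z
    simpa [hF, smul_eq_mul, hH0] using this
  have hFabs : ∀ z ∈ B, z ≠ z₀ → ‖F z‖ = ‖c * (z - w)‖ := by
    intro z hz hne
    have h2 : ‖z - z₀‖ ≠ 0 := by
      simpa [sub_eq_zero] using hne
    have h1 : ‖z - z₀‖ * ‖F z‖
        = ‖z - z₀‖ * (‖c‖ * ‖z - w‖) := by
      rw [← norm_mul, hFeq z hz, habs z hz, norm_mul, norm_mul]; ring
    have h3 := mul_left_cancel₀ h2 h1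
    rw [norm_mul]; exact h3
  set G : ℂ → ℂ := fun z => F z / (c * (z - w)) with hG
  have hden : ∀ z ∈ B, c * (z - w) ≠ 0 := fun z hz => mul_ne_zero hc (hsub z hz)
  have hGd : DifferentiableOn ℂ G B := by
    apply hFd.div
    · exact (differentiableOn_const c).mul (differentiableOn_id.sub (differentiableOn_const w))
    · exact hden
  have hGabs : ∀ z ∈ B, ‖G z‖ = 1 := by
    intro z hz
    rcases eq_or_ne z z₀ with rfl | hne
    · have hcont : ContinuousAt (fun y => ‖G y‖) z :=
        continuous_norm.continuousAt.comp
          ((hGd.differentiableAt (hBo.mem_nhds hz)).continuousAt)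
      have hev : ∀ᶠ y in nhdsWithin z {z}ᶜ, ‖G y‖ = 1 := by
        filter_upwards [self_mem_nhdsWithin,
          mem_nhdsWithin_of_mem_nhds (hBo.mem_nhds hz)] with y hy1 hy2
        simp only [hG, norm_div, hFabs y hy2 hy1]
        exact div_self (norm_ne_zero_iff.mpr (hden y hy2))
      have hev' : (fun _ : ℂ => (1:ℝ)) =ᶠ[nhdsWithin z {z}ᶜ] fun y => ‖G y‖ :=
        hev.mono fun y h => h.symm
      haveI : (nhdsWithin z {z}ᶜ).NeBot := Module.punctured_nhds_neBot ℂ ℂ z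
      exact (tendsto_nhds_unique
        (hcont.tendsto.mono_left nhdsWithin_le_nhds)
        (Filter.Tendsto.congr' hev' tendsto_const_nhds))
    · simp only [hG, norm_div, hFabs z hz hne]
      exact div_self (norm_ne_zero_iff.mpr (hden z hz))
  have h0B : (0:ℂ) ∈ B := by simp [hB]
  have hmax : IsMaxOn (norm ∘ G) B 0 := by
    intro z hz
    simp only [Function.comp, Set.mem_setOf_eq]
    rw [hGabs z hz, hGabs 0 h0B]
  have hconst := Complex.eqOn_of_isPreconnected_of_isMaxOn_norm
    (convex_ball (0:ℂ) 1).isPreconnected hBo hGd h0B hmax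
  refine ⟨G 0 * c, ?_, ?_⟩
  · rw [norm_mul, hGabs 0 h0B, one_mul]
  · intro z hz
    have hGz : G z = G 0 := hconst hz
    have hFz : F z = G z * (c * (z - w)) := by
      rw [hG]
      exact (div_mul_cancel₀ (F z) (hden z hz)).symm
    rw [← hFeq z hz, hFz, hGz]
    ring
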